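/- arXiv:2402.11174 — 2 statements merged into one kernel-verified Lean document; each statement's English description precedes it below -/
import Mathlib

section
/- Let N ∈ ℕ, N ≥ 1, and p ≥ 1. For every u ∈ L^p(ℝ^N) such that ∬_{ℝ^N×ℝ^N} |u(x)−u(y)|^p / |x−y|^{N+s₀p} dx dy < ∞ for some s₀ ∈ (0,1), one has lim_{s↓0} s ∬_{ℝ^N×ℝ^N} |u(x)−u(y)|^p / |x−y|^{N+sp} dx dy = (2Nω_N/p) ‖u‖_{L^p(ℝ^N)}^p, where ω_N = π^{N/2}/Γ(N/2 + 1) is the Lebesgue measure of the unit ball of ℝ^N. -/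
open MeasureTheory Filter Topology Metric Set ENNReal

namespace MazyaShap

variable {N : ℕ}

local notation "EN" => EuclideanSpace ℝ (Fin N)

lemma lintegral_neg_eq (f : EN → ℝ≥0∞) : ∫⁻ x, f (-x) = ∫⁻ x, f x := by
  conv_rhs => rw [← Measure.map_neg_eq_self (volume : Measure EN)]
  exact (lintegral_map_equiv f (MeasurableEquiv.neg EN)).symm

lemma lintegral_sub_eq (f : EN → ℝ≥0∞) (x : EN) : ∫⁻ h, f (x - h) = ∫⁻ y, f y := by
  have h1 : ∀ h : EN, x - h = x + (-h) := fun h => sub_eq_add_neg x h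
  simp_rw [h1]
  rw [lintegral_neg_eq (fun h => f (x + h))]
  exact lintegral_add_left_eq_self f x

lemma measurable_W (a : ℝ) : Measurable (fun h : EN => ((‖h‖₊ : ℝ≥0∞) ^ a)⁻¹) :=
  ((measurable_nnnorm.comp measurable_id).coe_nnreal_ennreal.pow_const a).inv

lemma mass (hN : 1 ≤ N) {a R : ℝ} (ha : (N : ℝ) < a) (hR : 0 < R) :
    ∫⁻ h in (ball (0 : EN) R)ᶜ, ((‖h‖₊ : ℝ≥0∞) ^ a)⁻¹
      = ENNReal.ofReal ((N / (a - N)) * R ^ ((N : ℝ) - a)) * volume (ball (0 : EN) 1) := by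
  haveI : Nonempty (Fin N) := ⟨⟨0, hN⟩⟩
  have ha0 : 0 < a := lt_of_le_of_lt (Nat.cast_nonneg N) ha
  have hfr : Module.finrank ℝ (EuclideanSpace ℝ (Fin N)) = N := finrank_euclideanSpace_fin
  have hmem : ∀ h : EN, h ∈ (ball (0 : EN) R)ᶜ ↔ R ≤ ‖h‖ := by
    intro h; simp [mem_ball, dist_zero_right, not_lt]
  -- integrability
  have hInt : IntegrableOn (fun h : EN => ‖h‖ ^ (-a)) (ball (0 : EN) R)ᶜ := by
    have hint : Integrable (fun x : EN => (1 + R⁻¹) ^ a * (1 + ‖x‖) ^ (-a)) :=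
      (integrable_one_add_norm (by rw [hfr]; exact ha)).const_mul _
    refine hint.restrict.mono'
      ((by fun_prop : Measurable (fun h : EN => ‖h‖ ^ (-a))).aestronglyMeasurable) ?_
    refine (ae_restrict_iff' measurableSet_ball.compl).2 (ae_of_all _ ?_)
    intro h hh
    have hRh : R ≤ ‖h‖ := (hmem h).1 hh
    have hn : 0 < ‖h‖ := lt_of_lt_of_le hR hRh
    have key : (1 + ‖h‖) ≤ (1 + R⁻¹) * ‖h‖ := by
      rw [add_mul, one_mul]
      have : 1 ≤ R⁻¹ * ‖h‖ := by
        rw [inv_mul_eq_div, le_div_iff₀ hR, one_mul]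
        exact hRh
      linarith
    have h1 : ((1 + R⁻¹) * ‖h‖) ^ (-a) ≤ (1 + ‖h‖) ^ (-a) :=
      Real.rpow_le_rpow_of_nonpos (by positivity) key (neg_nonpos.2 ha0.le)
    rw [Real.mul_rpow (by positivity) hn.le] at h1
    have hpos : (0:ℝ) < (1 + R⁻¹) ^ a := Real.rpow_pos_of_pos (by positivity) a
    rw [Real.norm_of_nonneg (Real.rpow_nonneg (norm_nonneg h) _)]
    calc ‖h‖ ^ (-a) = ((1 + R⁻¹) ^ a * (1 + R⁻¹) ^ (-a)) * ‖h‖ ^ (-a) := by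
          rw [← Real.rpow_add (show (0:ℝ) < 1 + R⁻¹ by positivity), add_neg_cancel,
            Real.rpow_zero, one_mul]
      _ = (1 + R⁻¹) ^ a * ((1 + R⁻¹) ^ (-a) * ‖h‖ ^ (-a)) := by ring
      _ ≤ (1 + R⁻¹) ^ a * (1 + ‖h‖) ^ (-a) := by
          exact mul_le_mul_of_nonneg_left h1 hpos.le
  -- rewrite the lintegral as ofReal of a Bochner integral
  have hcong : ∫⁻ h in (ball (0 : EN) R)ᶜ, ((‖h‖₊ : ℝ≥0∞) ^ a)⁻¹
      = ∫⁻ h in (ball (0 : EN) R)ᶜ, ENNReal.ofReal (‖h‖ ^ (-a)) := by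
    refine setLIntegral_congr_fun measurableSet_ball.compl ?_
    intro h hh
    have hn : 0 < ‖h‖ := lt_of_lt_of_le hR ((hmem h).1 hh)
    beta_reduce
    rw [Real.rpow_neg hn.le, ENNReal.ofReal_inv_of_pos (Real.rpow_pos_of_pos hn a),
      ← ENNReal.ofReal_rpow_of_nonneg hn.le ha0.le, ofReal_norm, enorm_eq_nnnorm]
  rw [hcong, ← ofReal_integral_eq_lintegral_ofReal hInt
    (ae_of_all _ fun h => Real.rpow_nonneg (norm_nonneg h) _)]
  -- compute the Bochner integral
  have hind : ∫ h in (ball (0 : EN) R)ᶜ, ‖h‖ ^ (-a)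
      = ∫ h : EN, (Set.indicator (Ici R) (fun r : ℝ => r ^ (-a))) ‖h‖ := by
    rw [← integral_indicator measurableSet_ball.compl]
    congr 1; ext h
    by_cases hh : R ≤ ‖h‖
    · rw [Set.indicator_of_mem (show h ∈ (ball (0:EN) R)ᶜ from (hmem h).2 hh), Set.indicator_of_mem (show ‖h‖ ∈ Ici R from hh)]
    · rw [Set.indicator_of_notMem (show h ∉ (ball (0:EN) R)ᶜ from fun c => hh ((hmem h).1 c)), Set.indicator_of_notMem (show ‖h‖ ∉ Ici R from hh)]
  rw [hind, integral_fun_norm_addHaar (volume : Measure (EuclideanSpace ℝ (Fin N)))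
    (Set.indicator (Ici R) (fun r : ℝ => r ^ (-a))), hfr]
  have h6 : ∫ y in Ioi (0:ℝ), y ^ (N - 1) • (Set.indicator (Ici R) (fun r : ℝ => r ^ (-a))) y
      = ∫ y in Ioi R, y ^ ((N : ℝ) - 1 - a) := by
    have e1 : ∀ y : ℝ, y ^ (N - 1) • (Set.indicator (Ici R) (fun r : ℝ => r ^ (-a))) y
        = Set.indicator (Ici R) (fun y : ℝ => y ^ (N - 1) * y ^ (-a)) y := by
      intro y
      by_cases hy : y ∈ Ici R
      · rw [Set.indicator_of_mem hy, Set.indicator_of_mem hy, smul_eq_mul]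
      · rw [Set.indicator_of_notMem hy, Set.indicator_of_notMem hy, smul_zero]
    simp_rw [e1]
    rw [integral_indicator measurableSet_Ici, Measure.restrict_restrict measurableSet_Ici,
      show Ici R ∩ Ioi (0:ℝ) = Ici R from Set.inter_eq_left.2 (fun y hy => lt_of_lt_of_le hR hy),
      ← integral_Ici_eq_integral_Ioi]
    refine setIntegral_congr_fun measurableSet_Ici ?_
    intro y hy
    have hy0 : 0 < y := lt_of_lt_of_le hR hy
    show y ^ (N - 1) * y ^ (-a) = y ^ ((N : ℝ) - 1 - a)
    rw [← Real.rpow_natCast y (N - 1), ← Real.rpow_add hy0]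
    congr 1
    rw [Nat.cast_sub hN]
    push_cast; ring
  rw [h6, integral_Ioi_rpow_of_lt (by linarith) hR]
  have he : (N : ℝ) - 1 - a + 1 = (N : ℝ) - a := by ring
  rw [he]
  have hne : a - (N : ℝ) ≠ 0 := sub_ne_zero.2 (ne_of_gt ha)
  have hωfin : volume (ball (0 : EN) 1) ≠ ⊤ := measure_ball_lt_top.ne
  have hne' : (N : ℝ) - a ≠ 0 := sub_ne_zero.2 (ne_of_lt ha)
  have harith : N • ((volume (ball (0 : EN) 1)).toReal •
        (-R ^ ((N : ℝ) - a) / ((N : ℝ) - a)))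
      = ((N / (a - N)) * R ^ ((N : ℝ) - a)) * (volume (ball (0 : EN) 1)).toReal := by
    rw [nsmul_eq_mul, smul_eq_mul]
    field_simp
    ring
  have hnn : (0:ℝ) ≤ (N / (a - N)) * R ^ ((N : ℝ) - a) :=
    mul_nonneg (div_nonneg (Nat.cast_nonneg N) (by linarith)) (Real.rpow_nonneg hR.le _)
  rw [measureReal_def, harith, ENNReal.ofReal_mul hnn, ENNReal.ofReal_toReal hωfin]

lemma lint_pow_eq {α : Type*} [MeasurableSpace α] (μ : Measure α) {p : ℝ} (hp0 : 0 < p)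
    (g : α → ℝ) :
    ∫⁻ x, (‖g x‖₊ : ℝ≥0∞) ^ p ∂μ = (eLpNorm g (ENNReal.ofReal p) μ) ^ p := by
  rw [eLpNorm_eq_lintegral_rpow_enorm_toReal (by simpa using hp0) ENNReal.ofReal_ne_top,
    ENNReal.toReal_ofReal hp0.le, ← ENNReal.rpow_mul, one_div, inv_mul_cancel₀ hp0.ne',
    ENNReal.rpow_one]
  simp only [enorm_eq_nnnorm]

lemma eLpNorm_translate {p : ℝ} (hp0 : 0 < p) (g : EN → ℝ) (h : EN) :
    eLpNorm (fun x => g (x - h)) (ENNReal.ofReal p) volume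
      = eLpNorm g (ENNReal.ofReal p) volume := by
  rw [eLpNorm_eq_lintegral_rpow_enorm_toReal (by simpa using hp0) ENNReal.ofReal_ne_top,
    eLpNorm_eq_lintegral_rpow_enorm_toReal (by simpa using hp0) ENNReal.ofReal_ne_top,
    lintegral_sub_right_eq_self
      (fun x => ‖g x‖ₑ ^ (ENNReal.ofReal p).toReal) h]

lemma Dlim {p : ℝ} (hp : 1 ≤ p) (u : EN → ℝ) (hum : Measurable u)
    (hu : MemLp u (ENNReal.ofReal p) volume) {ε : ℝ≥0∞} (hε : 0 < ε) :
    ∃ R : ℝ, 1 ≤ R ∧ ∀ h : EN, R ≤ ‖h‖ →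
      (∫⁻ x, (‖u x - u (x - h)‖₊ : ℝ≥0∞) ^ p) ∈
        Icc ((2 * ∫⁻ x, (‖u x‖₊ : ℝ≥0∞) ^ p) - ε)
            ((2 * ∫⁻ x, (‖u x‖₊ : ℝ≥0∞) ^ p) + ε) := by
  have hp0 : 0 < p := lt_of_lt_of_le one_pos hp
  set q : ℝ≥0∞ := ENNReal.ofReal p with hq
  have hq1 : 1 ≤ q := by simpa [hq] using ENNReal.one_le_ofReal.2 hp
  set A : ℝ≥0∞ := eLpNorm u q volume with hAdef
  have hA : A ≠ ⊤ := hu.2.ne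
  set c : ℝ≥0∞ := (2 : ℝ≥0∞) ^ (1 / p) with hcdef
  have hc_ne_top : c ≠ ⊤ := ENNReal.rpow_ne_top_of_nonneg (by positivity) (by simp)
  have hcp : c ^ p = 2 := by
    rw [hcdef, ← ENNReal.rpow_mul, one_div, inv_mul_cancel₀ hp0.ne', ENNReal.rpow_one]
  have hc2 : c ≤ 2 := by
    calc c ≤ (2 : ℝ≥0∞) ^ (1 : ℝ) := by
          refine ENNReal.rpow_le_rpow_of_exponent_le (by norm_num) ?_
          rw [one_div]
          exact inv_le_one_of_one_le₀ hp
      _ = 2 := by simp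
  have hcA_ne : c * A ≠ ⊤ := ENNReal.mul_ne_top hc_ne_top hA
  have hTfin : (c * A) ^ p ≠ ⊤ := ENNReal.rpow_ne_top_of_nonneg hp0.le hcA_ne
  have hcmul : (c * A) ^ p = 2 * A ^ p := by
    rw [ENNReal.mul_rpow_of_nonneg _ _ hp0.le, hcp]
  -- continuity of rpow at c * A
  have hcont : Tendsto (fun x : ℝ≥0∞ => x ^ p) (𝓝 (c * A)) (𝓝 ((c * A) ^ p)) :=
    (ENNReal.continuous_rpow_const.tendsto _)
  have hev : ∀ᶠ x in 𝓝 (c * A), x ^ p ∈ Icc ((c * A) ^ p - ε) ((c * A) ^ p + ε) :=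
    (ENNReal.tendsto_nhds hTfin).1 hcont ε hε
  obtain ⟨δ₀, hδ₀, hδsub⟩ := (ENNReal.hasBasis_nhds_of_ne_top hcA_ne).eventually_iff.1 hev
  set δ' : ℝ≥0∞ := min δ₀ 1 with hδ'def
  have hδ'0 : δ' ≠ 0 := by
    simp only [hδ'def, ne_eq, min_eq_iff]
    intro hc'
    rcases hc' with ⟨h1, -⟩ | ⟨h1, -⟩ <;> simp_all [hδ₀.ne']
  have hδ'top : δ' ≠ ⊤ := (lt_of_le_of_lt (min_le_right _ _) (by norm_num)).ne
  set δe : ℝ≥0∞ := δ' / 4 with hδedef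
  have hδe0 : δe ≠ 0 := by
    simp only [hδedef, ne_eq, ENNReal.div_eq_zero_iff]
    push_neg
    exact ⟨hδ'0, by norm_num⟩
  have h4δe : 4 * δe = δ' := by
    rw [hδedef, ENNReal.mul_div_cancel' (by norm_num) (by norm_num)]
  -- approximate by a compactly supported continuous function
  obtain ⟨v, hv_supp, hv_close, hv_cont, hv_mem⟩ :=
    hu.exists_hasCompactSupport_eLpNorm_sub_le ENNReal.ofReal_ne_top hδe0
  obtain ⟨r, hr⟩ := hv_supp.isCompact.isBounded.subset_closedBall (0 : EN)
  refine ⟨max 1 (2 * r + 1), le_max_left _ _, ?_⟩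
  intro h hh
  -- disjoint supports
  have hdisj : ∀ x : EN, v x = 0 ∨ v (x - h) = 0 := by
    intro x
    by_contra hcon
    push_neg at hcon
    have h1 : x ∈ tsupport v := subset_tsupport v hcon.1
    have h2 : x - h ∈ tsupport v := subset_tsupport v hcon.2
    have hx1 : ‖x‖ ≤ r := by simpa [mem_closedBall, dist_zero_right] using hr h1
    have hx2 : ‖x - h‖ ≤ r := by simpa [mem_closedBall, dist_zero_right] using hr h2
    have : ‖h‖ ≤ 2 * r := by
      have : h = x - (x - h) := by abel
      calc ‖h‖ = ‖x - (x - h)‖ := by rw [← this]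
        _ ≤ ‖x‖ + ‖x - h‖ := norm_sub_le _ _
        _ ≤ 2 * r := by linarith
    have := le_trans (le_max_right 1 (2 * r + 1)) hh
    linarith
  set nv : ℝ≥0∞ := eLpNorm v q volume with hnvdef
  set nw : ℝ≥0∞ := eLpNorm (fun x => u x - u (x - h)) q volume with hnwdef
  -- with disjoint supports the seminorm of v - v(·-h) is exactly c * nv
  have hIz : ∫⁻ x, (‖v x - v (x - h)‖₊ : ℝ≥0∞) ^ p
      = 2 * ∫⁻ x, (‖v x‖₊ : ℝ≥0∞) ^ p := by
    have hpt : ∀ x : EN, (‖v x - v (x - h)‖₊ : ℝ≥0∞) ^ p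
        = (‖v x‖₊ : ℝ≥0∞) ^ p + (‖v (x - h)‖₊ : ℝ≥0∞) ^ p := by
      intro x
      rcases hdisj x with h0 | h0
      · rw [h0, zero_sub, nnnorm_neg]
        simp [ENNReal.zero_rpow_of_pos hp0]
      · rw [h0, sub_zero]
        simp [ENNReal.zero_rpow_of_pos hp0]
    rw [lintegral_congr hpt, lintegral_add_left (by fun_prop), lintegral_sub_right_eq_self
      (fun x => (‖v x‖₊ : ℝ≥0∞) ^ p) h, two_mul]
  have hnz : eLpNorm (fun x => v x - v (x - h)) q volume = c * nv := by
    have e1 := lint_pow_eq volume hp0 (fun x => v x - v (x - h))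
    have e2 := lint_pow_eq volume hp0 v
    have : (eLpNorm (fun x => v x - v (x - h)) q volume) ^ p = (c * nv) ^ p := by
      rw [← e1, hIz, e2, ENNReal.mul_rpow_of_nonneg _ _ hp0.le, hcp]
    have hinj : ∀ a b : ℝ≥0∞, a ^ p = b ^ p → a = b := by
      intro a b hab
      have := congrArg (fun t : ℝ≥0∞ => t ^ (1 / p)) hab
      simpa [← ENNReal.rpow_mul, one_div, mul_inv_cancel₀ hp0.ne'] using this
    exact hinj _ _ this
  -- triangle inequalities
  have hmu : AEStronglyMeasurable u volume := hum.aestronglyMeasurable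
  have hmut : AEStronglyMeasurable (fun x => u (x - h)) volume :=
    (hum.comp (measurable_id.sub measurable_const)).aestronglyMeasurable
  have hmv : AEStronglyMeasurable v volume := hv_cont.aestronglyMeasurable
  have hmvt : AEStronglyMeasurable (fun x => v (x - h)) volume :=
    (hv_cont.comp (continuous_id.sub continuous_const)).aestronglyMeasurable
  have hd1 : eLpNorm (fun x => u x - v x) q volume ≤ δe := hv_close
  have hd2 : eLpNorm (fun x => u (x - h) - v (x - h)) q volume ≤ δe := by
    rw [eLpNorm_translate hp0 (fun x => u x - v x) h]
    exact hv_close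
  have htri1 : nw ≤ c * nv + (δe + δe) := by
    have hfun : (fun x => u x - u (x - h))
        = (fun x => (v x - v (x - h)) + ((u x - v x) - (u (x - h) - v (x - h)))) := by
      funext x; ring
    rw [hnwdef, hfun]
    calc eLpNorm (fun x => (v x - v (x - h)) + ((u x - v x) - (u (x - h) - v (x - h)))) q volume
        ≤ eLpNorm (fun x => v x - v (x - h)) q volume
          + eLpNorm (fun x => (u x - v x) - (u (x - h) - v (x - h))) q volume := by
          refine eLpNorm_add_le (hmv.sub hmvt) ((hmu.sub hmv).sub (hmut.sub hmvt)) hq1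
      _ ≤ c * nv + (δe + δe) := by
          refine add_le_add (le_of_eq hnz) ?_
          calc eLpNorm (fun x => (u x - v x) - (u (x - h) - v (x - h))) q volume
              ≤ eLpNorm (fun x => u x - v x) q volume
                + eLpNorm (fun x => u (x - h) - v (x - h)) q volume :=
                eLpNorm_sub_le (hmu.sub hmv) (hmut.sub hmvt) hq1
            _ ≤ δe + δe := add_le_add hd1 hd2
  have htri2 : c * nv ≤ nw + (δe + δe) := by
    have hfun : (fun x => v x - v (x - h))
        = (fun x => (u x - u (x - h)) - ((u x - v x) - (u (x - h) - v (x - h)))) := by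
      funext x; ring
    rw [← hnz, hfun]
    calc eLpNorm (fun x => (u x - u (x - h)) - ((u x - v x) - (u (x - h) - v (x - h)))) q volume
        ≤ eLpNorm (fun x => u x - u (x - h)) q volume
          + eLpNorm (fun x => (u x - v x) - (u (x - h) - v (x - h))) q volume :=
          eLpNorm_sub_le (hmu.sub hmut) ((hmu.sub hmv).sub (hmut.sub hmvt)) hq1
      _ ≤ nw + (δe + δe) := by
          refine add_le_add (le_of_eq rfl) ?_
          calc eLpNorm (fun x => (u x - v x) - (u (x - h) - v (x - h))) q volume
              ≤ eLpNorm (fun x => u x - v x) q volume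
                + eLpNorm (fun x => u (x - h) - v (x - h)) q volume :=
                eLpNorm_sub_le (hmu.sub hmv) (hmut.sub hmvt) hq1
            _ ≤ δe + δe := add_le_add hd1 hd2
  have hnvA1 : nv ≤ A + δe := by
    have hfun : v = (fun x => u x + (v x - u x)) := by funext x; ring
    rw [hnvdef, hfun]
    calc eLpNorm (fun x => u x + (v x - u x)) q volume
        ≤ eLpNorm u q volume + eLpNorm (fun x => v x - u x) q volume :=
          eLpNorm_add_le hmu (hmv.sub hmu) hq1
      _ ≤ A + δe := by
          refine add_le_add (le_of_eq rfl) ?_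
          have : eLpNorm (fun x => v x - u x) q volume
              = eLpNorm (fun x => u x - v x) q volume := eLpNorm_sub_comm v u q volume
          rw [this]; exact hd1
  have hAnv : A ≤ nv + δe := by
    have hfun : u = (fun x => v x + (u x - v x)) := by funext x; ring
    rw [hAdef, hfun]
    calc eLpNorm (fun x => v x + (u x - v x)) q volume
        ≤ eLpNorm v q volume + eLpNorm (fun x => u x - v x) q volume :=
          eLpNorm_add_le hmv (hmu.sub hmv) hq1
      _ ≤ nv + δe := add_le_add (le_of_eq rfl) hd1
  -- nw is within δ' of c * A
  have hup : nw ≤ c * A + δ' := by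
    calc nw ≤ c * nv + (δe + δe) := htri1
      _ ≤ c * (A + δe) + (δe + δe) := by gcongr
      _ = c * A + (c * δe + (δe + δe)) := by ring
      _ ≤ c * A + (2 * δe + (δe + δe)) := by gcongr
      _ ≤ c * A + 4 * δe := by
          refine add_le_add_right (le_of_eq ?_) _
          ring
      _ = c * A + δ' := by rw [h4δe]
  have hlow : c * A - δ' ≤ nw := by
    rw [tsub_le_iff_right]
    calc c * A ≤ c * (nv + δe) := by gcongr
      _ = c * nv + c * δe := by ring
      _ ≤ (nw + (δe + δe)) + 2 * δe := by gcongr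
      _ = nw + 4 * δe := by ring
      _ = nw + δ' := by rw [h4δe]
  have hmem : nw ∈ Icc (c * A - δ₀) (c * A + δ₀) := by
    constructor
    · exact le_trans (tsub_le_tsub_left (min_le_left δ₀ 1) (c * A)) hlow
    · exact le_trans hup (add_le_add_right (min_le_left δ₀ 1) (c * A))
  have := hδsub hmem
  rw [hcmul] at this
  have e2 := lint_pow_eq volume hp0 u
  have e3 := lint_pow_eq volume hp0 (fun x => u x - u (x - h))
  rw [e2, e3, ← hnwdef, ← hAdef]
  exact this

lemma stepA {p : ℝ} (hp0 : 0 < p) (u : EN → ℝ) (hum : Measurable u) {a : ℝ} (ha : 0 < a) :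
    ∫⁻ x, ∫⁻ y, ENNReal.ofReal (|u x - u y| ^ p / dist x y ^ a)
      = ∫⁻ h, ((‖h‖₊ : ℝ≥0∞) ^ a)⁻¹ * ∫⁻ x, (‖u x - u (x - h)‖₊ : ℝ≥0∞) ^ p := by
  have hpt : ∀ x y : EN, ENNReal.ofReal (|u x - u y| ^ p / dist x y ^ a)
      = (‖u x - u y‖₊ : ℝ≥0∞) ^ p * ((‖x - y‖₊ : ℝ≥0∞) ^ a)⁻¹ := by
    intro x y
    by_cases hxy : x = y
    · subst hxy
      rw [sub_self, abs_zero, Real.zero_rpow hp0.ne', zero_div, ENNReal.ofReal_zero,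
        sub_self, nnnorm_zero]
      rw [ENNReal.coe_zero, ENNReal.zero_rpow_of_pos hp0, zero_mul]
    · have hd : 0 < dist x y := dist_pos.2 hxy
      have hB : 0 < dist x y ^ a := Real.rpow_pos_of_pos hd a
      rw [ENNReal.ofReal_div_of_pos hB, div_eq_mul_inv]
      congr 1
      · rw [← ENNReal.ofReal_rpow_of_nonneg (abs_nonneg _) hp0.le,
          ← Real.enorm_eq_ofReal_abs, enorm_eq_nnnorm]
      · congr 1
        rw [← ENNReal.ofReal_rpow_of_nonneg hd.le ha.le, dist_eq_norm,
          ofReal_norm, enorm_eq_nnnorm]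
  simp_rw [hpt]
  have hsub : ∀ x : EN, (∫⁻ y, (‖u x - u y‖₊ : ℝ≥0∞) ^ p * ((‖x - y‖₊ : ℝ≥0∞) ^ a)⁻¹)
      = ∫⁻ h, (‖u x - u (x - h)‖₊ : ℝ≥0∞) ^ p * ((‖h‖₊ : ℝ≥0∞) ^ a)⁻¹ := by
    intro x
    rw [← lintegral_sub_eq (fun y => (‖u x - u y‖₊ : ℝ≥0∞) ^ p * ((‖x - y‖₊ : ℝ≥0∞) ^ a)⁻¹) x]
    congr 1
    funext h
    rw [_root_.sub_sub_cancel]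
  simp_rw [hsub]
  rw [lintegral_lintegral_swap]
  · refine lintegral_congr fun h => ?_
    rw [lintegral_mul_const _ ?_, mul_comm]
    fun_prop
  · apply Measurable.aemeasurable
    apply Measurable.mul
    · apply Measurable.pow_const
      refine Measurable.coe_nnreal_ennreal (Measurable.nnnorm ?_)
      exact (hum.comp measurable_fst).sub (hum.comp (measurable_fst.sub measurable_snd))
    · fun_prop

theorem main_meas (hN : 1 ≤ N) (p : ℝ) (hp : 1 ≤ p)
    (u : EN → ℝ) (hum : Measurable u)
    (hu : MemLp u (ENNReal.ofReal p))
    (s₀ : ℝ) (hs₀ : s₀ ∈ Set.Ioo (0:ℝ) 1)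
    (hfin : ∫⁻ x, ∫⁻ y,
        ENNReal.ofReal (|u x - u y| ^ p / dist x y ^ ((N : ℝ) + s₀ * p)) < ⊤) :
    Tendsto (fun s : ℝ => ENNReal.ofReal s *
        ∫⁻ x, ∫⁻ y, ENNReal.ofReal (|u x - u y| ^ p / dist x y ^ ((N : ℝ) + s * p)))
      (nhdsWithin 0 (Set.Ioi 0))
      (nhds (ENNReal.ofReal
          (2 * N * (Real.pi ^ ((N : ℝ) / 2) / Real.Gamma ((N : ℝ) / 2 + 1)) / p) *
        ∫⁻ x, ENNReal.ofReal (|u x| ^ p))) := by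
  haveI : Nonempty (Fin N) := ⟨⟨0, hN⟩⟩
  have hp0 : 0 < p := lt_of_lt_of_le one_pos hp
  have hN0 : (0:ℝ) < N := by exact_mod_cast hN
  set q : ℝ≥0∞ := ENNReal.ofReal p with hqdef
  set W : ℝ → EN → ℝ≥0∞ := fun a h => ((‖h‖₊ : ℝ≥0∞) ^ a)⁻¹ with hWdef
  set D : EN → ℝ≥0∞ := fun h => ∫⁻ x, (‖u x - u (x - h)‖₊ : ℝ≥0∞) ^ p with hDdef
  set L : ℝ≥0∞ := ∫⁻ x, (‖u x‖₊ : ℝ≥0∞) ^ p with hLdef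
  set A : ℝ≥0∞ := eLpNorm u q volume with hAdef
  have hA_top : A ≠ ⊤ := hu.2.ne
  have hLA : L = A ^ p := lint_pow_eq volume hp0 u
  have hL_top : L ≠ ⊤ := by
    rw [hLA]; exact ENNReal.rpow_ne_top_of_nonneg hp0.le hA_top
  set T : ℝ≥0∞ := 2 * L with hTdef
  have hT_top : T ≠ ⊤ := ENNReal.mul_ne_top (by norm_num) hL_top
  have hWm : ∀ a : ℝ, Measurable (W a) := fun a => by
    show Measurable fun h : EN => ((‖h‖₊ : ℝ≥0∞) ^ a)⁻¹
    fun_prop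
  -- global bound on D
  set Cb : ℝ≥0∞ := (2 * A) ^ p with hCbdef
  have hCb_top : Cb ≠ ⊤ :=
    ENNReal.rpow_ne_top_of_nonneg hp0.le (ENNReal.mul_ne_top (by norm_num) hA_top)
  have hq1 : 1 ≤ q := by simpa [hqdef] using ENNReal.one_le_ofReal.2 hp
  have hmu : AEStronglyMeasurable u (volume : Measure EN) := hum.aestronglyMeasurable
  have hDb : ∀ h : EN, D h ≤ Cb := by
    intro h
    have hmut : AEStronglyMeasurable (fun x : EN => u (x - h)) volume :=
      (hum.comp (measurable_id.sub measurable_const)).aestronglyMeasurable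
    have h1 : eLpNorm (fun x => u x - u (x - h)) q volume ≤ 2 * A := by
      calc eLpNorm (fun x => u x - u (x - h)) q volume
          ≤ eLpNorm u q volume + eLpNorm (fun x => u (x - h)) q volume :=
            eLpNorm_sub_le hmu hmut hq1
        _ = A + A := by rw [hAdef, eLpNorm_translate hp0 u h]
        _ = 2 * A := (two_mul A).symm
    rw [hDdef]
    calc (∫⁻ x, (‖u x - u (x - h)‖₊ : ℝ≥0∞) ^ p)
        = (eLpNorm (fun x => u x - u (x - h)) q volume) ^ p := lint_pow_eq volume hp0 _
      _ ≤ (2 * A) ^ p := ENNReal.rpow_le_rpow h1 hp0.le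
  -- the representation
  have repr : ∀ s : ℝ, 0 < s →
      (∫⁻ x, ∫⁻ y, ENNReal.ofReal (|u x - u y| ^ p / dist x y ^ ((N : ℝ) + s * p)))
        = ∫⁻ h, W ((N : ℝ) + s * p) h * D h := by
    intro s hs
    exact stepA hp0 u hum (by positivity)
  -- masses
  set ω : ℝ≥0∞ := volume (ball (0 : EN) 1) with hωdef
  have hω_top : ω ≠ ⊤ := measure_ball_lt_top.ne
  set κ : ℝ≥0∞ := ENNReal.ofReal ((N : ℝ) / p) * ω with hκdef
  have hκ_top : κ ≠ ⊤ := ENNReal.mul_ne_top ENNReal.ofReal_ne_top hω_top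
  have hMs : ∀ R s : ℝ, 1 ≤ R → 0 < s →
      ENNReal.ofReal s * ∫⁻ h in (ball (0 : EN) R)ᶜ, W ((N : ℝ) + s * p) h
        = ENNReal.ofReal (((N : ℝ) / p) * R ^ (-(s * p))) * ω := by
    intro R s hR hs
    have hgt : (N : ℝ) < (N : ℝ) + s * p := by nlinarith
    rw [hWdef]
    rw [mass hN hgt (lt_of_lt_of_le one_pos hR)]
    rw [← mul_assoc, ← ENNReal.ofReal_mul hs.le]
    congr 2
    have e1 : (N : ℝ) + s * p - N = s * p := by ring
    have e2 : (N : ℝ) - ((N : ℝ) + s * p) = -(s * p) := by ring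
    rw [e1, e2]
    field_simp
  have hMslim : ∀ R : ℝ, 1 ≤ R →
      Tendsto (fun s : ℝ => ENNReal.ofReal (((N : ℝ) / p) * R ^ (-(s * p))) * ω)
        (nhdsWithin 0 (Set.Ioi 0)) (𝓝 κ) := by
    intro R hR
    have hR0 : (0:ℝ) < R := lt_of_lt_of_le one_pos hR
    have hreal : Tendsto (fun s : ℝ => ((N : ℝ) / p) * R ^ (-(s * p)))
        (nhdsWithin 0 (Set.Ioi 0)) (𝓝 ((N : ℝ) / p)) := by
      have hc : Continuous fun s : ℝ => ((N : ℝ) / p) * R ^ (-(s * p)) := by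
        have he : ∀ s : ℝ, R ^ (-(s * p)) = Real.exp (Real.log R * -(s * p)) := fun s =>
          Real.rpow_def_of_pos hR0 _
        simp_rw [he]
        exact continuous_const.mul (Real.continuous_exp.comp
          (continuous_const.mul ((continuous_id.mul continuous_const).neg)))
      have h2 : Tendsto (fun s : ℝ => ((N : ℝ) / p) * R ^ (-(s * p)))
          (nhdsWithin 0 (Set.Ioi 0)) (𝓝 (((N : ℝ) / p) * R ^ (-(0 * p)))) :=
        (hc.tendsto 0).mono_left nhdsWithin_le_nhds
      simpa using h2
    rw [hκdef]
    exact ENNReal.Tendsto.mul_const (ENNReal.tendsto_ofReal hreal) (Or.inr hω_top)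
  -- the "far" part
  set far : ℝ → ℝ≥0∞ := fun s =>
    ENNReal.ofReal s * ∫⁻ h in (ball (0 : EN) 1)ᶜ, W ((N : ℝ) + s * p) h * D h with hfardef
  set near : ℝ → ℝ≥0∞ := fun s =>
    ENNReal.ofReal s * ∫⁻ h in ball (0 : EN) 1, W ((N : ℝ) + s * p) h * D h with hneardef
  have hmemY : ∀ (R : ℝ) (h : EN), h ∈ (ball (0 : EN) R)ᶜ ↔ R ≤ ‖h‖ := by
    intro R h; simp [mem_ball, dist_zero_right, not_lt]
  -- key inequalities for fixed ε and R
  have key : ∀ (ε : ℝ≥0∞) (R : ℝ), 1 ≤ R →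
      (∀ h : EN, R ≤ ‖h‖ → D h ∈ Icc (T - ε) (T + ε)) →
      ∀ s : ℝ, 0 < s →
        ((T - ε) * (ENNReal.ofReal (((N : ℝ) / p) * R ^ (-(s * p))) * ω) ≤ far s ∧
         far s ≤ Cb * (κ - ENNReal.ofReal (((N : ℝ) / p) * R ^ (-(s * p))) * ω) +
           (T + ε) * (ENNReal.ofReal (((N : ℝ) / p) * R ^ (-(s * p))) * ω)) := by
    intro ε R hRge1 hDR s hs
    set a : ℝ := (N : ℝ) + s * p with hadef
    set MsR : ℝ≥0∞ := ENNReal.ofReal (((N : ℝ) / p) * R ^ (-(s * p))) * ω with hMsRdef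
    have hMsR_top : MsR ≠ ⊤ := ENNReal.mul_ne_top ENNReal.ofReal_ne_top hω_top
    have hYX : (ball (0 : EN) R)ᶜ ⊆ (ball (0 : EN) 1)ᶜ :=
      compl_subset_compl.2 (ball_subset_ball hRge1)
    have hMR := hMs R s hRge1 hs
    rw [← hMsRdef] at hMR
    have hM1 := hMs 1 s le_rfl hs
    have hM1' : ENNReal.ofReal s * ∫⁻ h in (ball (0 : EN) 1)ᶜ, W a h = κ := by
      rw [hM1, hκdef]
      congr 2
      rw [Real.one_rpow, mul_one]
    -- split of the W-mass
    have hWsplit : ∫⁻ h in (ball (0 : EN) 1)ᶜ, W a h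
        = (∫⁻ h in (ball (0 : EN) 1)ᶜ \ (ball (0 : EN) R)ᶜ, W a h)
          + ∫⁻ h in (ball (0 : EN) R)ᶜ, W a h := by
      rw [← lintegral_union measurableSet_ball.compl disjoint_sdiff_self_left,
        diff_union_of_subset hYX]
    have hWann : ENNReal.ofReal s *
        ∫⁻ h in (ball (0 : EN) 1)ᶜ \ (ball (0 : EN) R)ᶜ, W a h = κ - MsR := by
      refine ENNReal.eq_sub_of_add_eq hMsR_top ?_
      rw [← hMR, ← mul_add, ← hWsplit, hM1']
    -- split of the integral of W * D
    have hsplit : ∫⁻ h in (ball (0 : EN) 1)ᶜ, W a h * D h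
        = (∫⁻ h in (ball (0 : EN) 1)ᶜ \ (ball (0 : EN) R)ᶜ, W a h * D h)
          + ∫⁻ h in (ball (0 : EN) R)ᶜ, W a h * D h := by
      rw [← lintegral_union measurableSet_ball.compl disjoint_sdiff_self_left,
        diff_union_of_subset hYX]
    constructor
    · -- lower bound
      have h1 : (∫⁻ h in (ball (0 : EN) R)ᶜ, W a h) * (T - ε)
          ≤ ∫⁻ h in (ball (0 : EN) R)ᶜ, W a h * D h := by
        rw [← lintegral_mul_const _ (hWm a)]
        refine lintegral_mono_ae ?_
        filter_upwards [ae_restrict_mem measurableSet_ball.compl] with h hh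
        exact mul_le_mul_right (hDR h ((hmemY R h).1 hh)).1 _
      calc (T - ε) * MsR = (T - ε) * (ENNReal.ofReal s *
            ∫⁻ h in (ball (0 : EN) R)ᶜ, W a h) := by rw [hMR]
        _ = ENNReal.ofReal s * ((∫⁻ h in (ball (0 : EN) R)ᶜ, W a h) * (T - ε)) := by ring
        _ ≤ ENNReal.ofReal s * ∫⁻ h in (ball (0 : EN) R)ᶜ, W a h * D h :=
            mul_le_mul_right h1 _
        _ ≤ far s := by
            rw [show far s = ENNReal.ofReal s *
              ∫⁻ h in (ball (0 : EN) 1)ᶜ, W a h * D h from rfl]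
            exact mul_le_mul_right (lintegral_mono_set hYX) _
    · -- upper bound
      have h2 : ∫⁻ h in (ball (0 : EN) 1)ᶜ \ (ball (0 : EN) R)ᶜ, W a h * D h
          ≤ Cb * ∫⁻ h in (ball (0 : EN) 1)ᶜ \ (ball (0 : EN) R)ᶜ, W a h := by
        rw [← lintegral_const_mul _ (hWm a)]
        refine lintegral_mono fun h => ?_
        calc W a h * D h ≤ W a h * Cb := mul_le_mul_right (hDb h) _
          _ = Cb * W a h := mul_comm _ _
      have h3 : ∫⁻ h in (ball (0 : EN) R)ᶜ, W a h * D h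
          ≤ (∫⁻ h in (ball (0 : EN) R)ᶜ, W a h) * (T + ε) := by
        rw [← lintegral_mul_const _ (hWm a)]
        refine lintegral_mono_ae ?_
        filter_upwards [ae_restrict_mem measurableSet_ball.compl] with h hh
        exact mul_le_mul_right (hDR h ((hmemY R h).1 hh)).2 _
      calc far s = ENNReal.ofReal s *
            ((∫⁻ h in (ball (0 : EN) 1)ᶜ \ (ball (0 : EN) R)ᶜ, W a h * D h)
              + ∫⁻ h in (ball (0 : EN) R)ᶜ, W a h * D h) := by
            rw [show far s = ENNReal.ofReal s *
              ∫⁻ h in (ball (0 : EN) 1)ᶜ, W a h * D h from rfl, hsplit]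
        _ = ENNReal.ofReal s *
              (∫⁻ h in (ball (0 : EN) 1)ᶜ \ (ball (0 : EN) R)ᶜ, W a h * D h)
            + ENNReal.ofReal s * ∫⁻ h in (ball (0 : EN) R)ᶜ, W a h * D h := by
            rw [mul_add]
        _ ≤ ENNReal.ofReal s *
              (Cb * ∫⁻ h in (ball (0 : EN) 1)ᶜ \ (ball (0 : EN) R)ᶜ, W a h)
            + ENNReal.ofReal s * ((∫⁻ h in (ball (0 : EN) R)ᶜ, W a h) * (T + ε)) := by
            exact add_le_add (mul_le_mul_right h2 _) (mul_le_mul_right h3 _)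
        _ = Cb * (ENNReal.ofReal s *
              ∫⁻ h in (ball (0 : EN) 1)ᶜ \ (ball (0 : EN) R)ᶜ, W a h)
            + (T + ε) * (ENNReal.ofReal s * ∫⁻ h in (ball (0 : EN) R)ᶜ, W a h) := by
            ring
        _ = Cb * (κ - MsR) + (T + ε) * MsR := by rw [hWann, hMR]
  -- convergence of the far part
  have hfar_tendsto : Tendsto far (nhdsWithin 0 (Set.Ioi 0)) (𝓝 (T * κ)) := by
    have hTκ_top : T * κ ≠ ⊤ := ENNReal.mul_ne_top hT_top hκ_top
    have hBound : ∀ ε : ℝ≥0∞, 0 < ε → ε ≠ ⊤ →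
        limsup far (nhdsWithin 0 (Set.Ioi 0)) ≤ (T + ε) * κ ∧
        (T - ε) * κ ≤ liminf far (nhdsWithin 0 (Set.Ioi 0)) := by
      intro ε hε hεtop
      obtain ⟨R, hRge1, hDR⟩ := Dlim hp u hum hu hε
      have hDR' : ∀ h : EN, R ≤ ‖h‖ → D h ∈ Icc (T - ε) (T + ε) := by
        intro h hh
        exact hDR h hh
      have hM := hMslim R hRge1
      constructor
      · -- limsup bound
        have hBnd : Tendsto (fun s : ℝ =>
            Cb * (κ - ENNReal.ofReal (((N : ℝ) / p) * R ^ (-(s * p))) * ω) +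
              (T + ε) * (ENNReal.ofReal (((N : ℝ) / p) * R ^ (-(s * p))) * ω))
            (nhdsWithin 0 (Set.Ioi 0)) (𝓝 (Cb * (κ - κ) + (T + ε) * κ)) := by
        -- t1
          have t1 : Tendsto (fun s : ℝ =>
              κ - ENNReal.ofReal (((N : ℝ) / p) * R ^ (-(s * p))) * ω)
              (nhdsWithin 0 (Set.Ioi 0)) (𝓝 (κ - κ)) :=
            ENNReal.Tendsto.sub tendsto_const_nhds hM (Or.inl hκ_top)
          exact (ENNReal.Tendsto.const_mul t1 (Or.inr hCb_top)).add
            (ENNReal.Tendsto.const_mul hM (Or.inr (ENNReal.add_ne_top.2 ⟨hT_top, hεtop⟩)))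
        have hBnd' : Tendsto (fun s : ℝ =>
            Cb * (κ - ENNReal.ofReal (((N : ℝ) / p) * R ^ (-(s * p))) * ω) +
              (T + ε) * (ENNReal.ofReal (((N : ℝ) / p) * R ^ (-(s * p))) * ω))
            (nhdsWithin 0 (Set.Ioi 0)) (𝓝 ((T + ε) * κ)) := by
          simpa [tsub_self] using hBnd
        have hev : far ≤ᶠ[nhdsWithin 0 (Set.Ioi 0)] fun s : ℝ =>
            Cb * (κ - ENNReal.ofReal (((N : ℝ) / p) * R ^ (-(s * p))) * ω) +
              (T + ε) * (ENNReal.ofReal (((N : ℝ) / p) * R ^ (-(s * p))) * ω) := by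
          filter_upwards [self_mem_nhdsWithin] with s hs
          exact (key ε R hRge1 hDR' s hs).2
        calc limsup far (nhdsWithin 0 (Set.Ioi 0))
            ≤ limsup _ (nhdsWithin 0 (Set.Ioi 0)) := limsup_le_limsup hev
          _ = (T + ε) * κ := hBnd'.limsup_eq
      · -- liminf bound
        have hBnd : Tendsto (fun s : ℝ =>
            (T - ε) * (ENNReal.ofReal (((N : ℝ) / p) * R ^ (-(s * p))) * ω))
            (nhdsWithin 0 (Set.Ioi 0)) (𝓝 ((T - ε) * κ)) :=
          ENNReal.Tendsto.const_mul hM (Or.inr (ne_top_of_le_ne_top hT_top (tsub_le_self)))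
        have hev : (fun s : ℝ =>
            (T - ε) * (ENNReal.ofReal (((N : ℝ) / p) * R ^ (-(s * p))) * ω)) ≤ᶠ[nhdsWithin 0 (Set.Ioi 0)] far := by
          filter_upwards [self_mem_nhdsWithin] with s hs
          exact (key ε R hRge1 hDR' s hs).1
        calc (T - ε) * κ = liminf (fun s : ℝ =>
              (T - ε) * (ENNReal.ofReal (((N : ℝ) / p) * R ^ (-(s * p))) * ω))
              (nhdsWithin 0 (Set.Ioi 0)) := hBnd.liminf_eq.symm
          _ ≤ liminf far (nhdsWithin 0 (Set.Ioi 0)) := liminf_le_liminf hev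
    -- combine
    refine tendsto_of_le_liminf_of_limsup_le ?_ ?_
    · -- T * κ ≤ liminf
      refine ENNReal.le_of_forall_pos_le_add ?_
      intro εn hεn _
      by_cases hκ0 : κ = 0
      · simp [hκ0]
      set ε : ℝ≥0∞ := (εn : ℝ≥0∞) / κ with hεdef
      have hε : 0 < ε := ENNReal.div_pos (by exact_mod_cast hεn.ne') hκ_top
      have hεtop : ε ≠ ⊤ := by
        simp [hεdef, ENNReal.div_eq_top, hκ0]
      have h2 := (hBound ε hε hεtop).2
      have hεκ : ε * κ = εn := ENNReal.div_mul_cancel hκ0 hκ_top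
      calc T * κ ≤ ((T - ε) + ε) * κ := mul_le_mul_left le_tsub_add _
        _ = (T - ε) * κ + ε * κ := by rw [add_mul]
        _ ≤ liminf far (nhdsWithin 0 (Set.Ioi 0)) + εn := by
            rw [hεκ]; exact add_le_add_left h2 _
    · -- limsup ≤ T * κ
      refine ENNReal.le_of_forall_pos_le_add ?_
      intro εn hεn _
      by_cases hκ0 : κ = 0
      · have h2 := (hBound 1 one_pos one_ne_top).1
        simp only [hκ0, mul_zero] at h2 ⊢
        exact le_trans h2 zero_le
      set ε : ℝ≥0∞ := (εn : ℝ≥0∞) / κ with hεdef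
      have hε : 0 < ε := ENNReal.div_pos (by exact_mod_cast hεn.ne') hκ_top
      have hεtop : ε ≠ ⊤ := by
        simp [hεdef, ENNReal.div_eq_top, hκ0]
      have h1 := (hBound ε hε hεtop).1
      have hεκ : ε * κ = εn := ENNReal.div_mul_cancel hκ0 hκ_top
      calc limsup far (nhdsWithin 0 (Set.Ioi 0)) ≤ (T + ε) * κ := h1
        _ = T * κ + ε * κ := by rw [add_mul]
        _ = T * κ + εn := by rw [hεκ]
  -- the near part tends to zero
  have hnear_tendsto : Tendsto near (nhdsWithin 0 (Set.Ioi 0)) (𝓝 0) := by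
    set C0 : ℝ≥0∞ := ∫⁻ h, W ((N : ℝ) + s₀ * p) h * D h with hC0def
    have hC0_top : C0 ≠ ⊤ := by
      rw [hC0def, ← repr s₀ hs₀.1]
      exact hfin.ne
    have hupper : ∀ s : ℝ, 0 < s → s ≤ s₀ → near s ≤ ENNReal.ofReal s * C0 := by
      intro s hs hss₀
      rw [show near s = ENNReal.ofReal s *
        ∫⁻ h in ball (0 : EN) 1, W ((N : ℝ) + s * p) h * D h from rfl]
      refine mul_le_mul_right ?_ _
      calc ∫⁻ h in ball (0 : EN) 1, W ((N : ℝ) + s * p) h * D h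
          ≤ ∫⁻ h in ball (0 : EN) 1, W ((N : ℝ) + s₀ * p) h * D h := by
            refine lintegral_mono_ae ?_
            filter_upwards [ae_restrict_mem measurableSet_ball] with h hh
            refine mul_le_mul_left ?_ _
            show ((‖h‖₊ : ℝ≥0∞) ^ ((N : ℝ) + s * p))⁻¹
              ≤ ((‖h‖₊ : ℝ≥0∞) ^ ((N : ℝ) + s₀ * p))⁻¹
            refine ENNReal.inv_le_inv.2 ?_
            refine ENNReal.rpow_le_rpow_of_exponent_ge ?_ ?_
            · have hlt : ‖h‖ < 1 := by simpa [mem_ball, dist_zero_right] using hh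
              rw [← ENNReal.coe_one, ENNReal.coe_le_coe]
              exact_mod_cast hlt.le
            · nlinarith [mul_le_mul_of_nonneg_right hss₀ hp0.le]
        _ ≤ C0 := by
            rw [hC0def]
            exact setLIntegral_le_lintegral _ _
    have h0 : Tendsto (fun s : ℝ => ENNReal.ofReal s * C0) (nhdsWithin 0 (Set.Ioi 0))
        (𝓝 0) := by
      have h1 : Tendsto (fun s : ℝ => ENNReal.ofReal s) (nhdsWithin 0 (Set.Ioi 0))
          (𝓝 (ENNReal.ofReal 0)) :=
        (ENNReal.tendsto_ofReal tendsto_id).mono_left nhdsWithin_le_nhds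
      simpa using ENNReal.Tendsto.mul_const h1 (Or.inr hC0_top)
    refine tendsto_of_tendsto_of_tendsto_of_le_of_le' tendsto_const_nhds h0 ?_ ?_
    · filter_upwards with s
      exact zero_le
    · filter_upwards [self_mem_nhdsWithin,
        Ioo_mem_nhdsGT_of_mem (⟨le_refl (0:ℝ), hs₀.1⟩ : (0:ℝ) ∈ Ico 0 s₀)] with s hs hs'
      exact hupper s hs hs'.2.le
  -- combine and identify the constant
  have htot : Tendsto (fun s : ℝ => near s + far s) (nhdsWithin 0 (Set.Ioi 0))
      (𝓝 (T * κ)) := by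
    have := hnear_tendsto.add hfar_tendsto
    simpa using this
  have heq : ∀ᶠ s : ℝ in nhdsWithin 0 (Set.Ioi 0),
      near s + far s = ENNReal.ofReal s *
        ∫⁻ x, ∫⁻ y, ENNReal.ofReal (|u x - u y| ^ p / dist x y ^ ((N : ℝ) + s * p)) := by
    filter_upwards [self_mem_nhdsWithin] with s hs
    show (ENNReal.ofReal s * ∫⁻ h in ball (0 : EN) 1, W ((N : ℝ) + s * p) h * D h)
        + (ENNReal.ofReal s * ∫⁻ h in (ball (0 : EN) 1)ᶜ, W ((N : ℝ) + s * p) h * D h)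
      = _
    rw [← mul_add,
      lintegral_add_compl (fun h => W ((N : ℝ) + s * p) h * D h) measurableSet_ball,
      repr s hs]
  have hgoal := htot.congr' heq
  -- identify constants
  have hLs : (∫⁻ x, ENNReal.ofReal (|u x| ^ p)) = L := by
    rw [hLdef]
    refine lintegral_congr fun x => ?_
    rw [← ENNReal.ofReal_rpow_of_nonneg (abs_nonneg _) hp0.le, ← Real.enorm_eq_ofReal_abs, enorm_eq_nnnorm]
  have hconst : ENNReal.ofReal
      (2 * N * (Real.pi ^ ((N : ℝ) / 2) / Real.Gamma ((N : ℝ) / 2 + 1)) / p) *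
        ∫⁻ x, ENNReal.ofReal (|u x| ^ p) = T * κ := by
    rw [hLs, hTdef, hκdef, hωdef]
    rw [EuclideanSpace.volume_ball (Fin N) 0 1]
    have hcard : Fintype.card (Fin N) = N := Fintype.card_fin N
    rw [hcard]
    have hΓpos : 0 < Real.Gamma ((N : ℝ) / 2 + 1) := Real.Gamma_pos_of_pos (by positivity)
    have hsqrt : (Real.sqrt Real.pi) ^ N = Real.pi ^ ((N : ℝ) / 2) := by
      rw [Real.sqrt_eq_rpow, ← Real.rpow_natCast (Real.pi ^ ((1:ℝ)/2)) N,
        ← Real.rpow_mul Real.pi_pos.le]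
      congr 1
      ring
    simp only [ENNReal.ofReal_one, one_pow, one_mul]
    have hvb : (0:ℝ) ≤ Real.sqrt Real.pi ^ N / Real.Gamma ((N : ℝ) / 2 + 1) := by positivity
    have hconst2 : (2 : ℝ≥0∞) * (ENNReal.ofReal ((N : ℝ) / p) *
        ENNReal.ofReal (Real.sqrt Real.pi ^ N / Real.Gamma ((N : ℝ) / 2 + 1)))
        = ENNReal.ofReal
          (2 * N * (Real.pi ^ ((N : ℝ) / 2) / Real.Gamma ((N : ℝ) / 2 + 1)) / p) := by
      rw [← ENNReal.ofReal_mul (by positivity), ← ENNReal.ofReal_ofNat 2,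
        ← ENNReal.ofReal_mul (by norm_num)]
      congr 1
      rw [← hsqrt]
      ring
    calc ENNReal.ofReal
          (2 * N * (Real.pi ^ ((N : ℝ) / 2) / Real.Gamma ((N : ℝ) / 2 + 1)) / p) * L
        = ((2 : ℝ≥0∞) * (ENNReal.ofReal ((N : ℝ) / p) *
            ENNReal.ofReal (Real.sqrt Real.pi ^ N / Real.Gamma ((N : ℝ) / 2 + 1)))) * L := by
          rw [hconst2]
      _ = 2 * L * (ENNReal.ofReal ((N : ℝ) / p) *
            ENNReal.ofReal (Real.sqrt Real.pi ^ N / Real.Gamma ((N : ℝ) / 2 + 1))) := by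
          ring
  rw [hconst]
  exact hgoal

end MazyaShap

open MeasureTheory Filter Topology Metric Set ENNReal

/-- The classical Maz'ya–Shaposhnikova asymptotic formula on `ℝ^N`: for `p ≥ 1` and
`u ∈ L^p(ℝ^N)` with finite Gagliardo seminorm for some `s₀ ∈ (0,1)`,
`lim_{s↓0} s ∬ |u(x)-u(y)|^p / |x-y|^{N+sp} dx dy = (2 N ω_N / p) ‖u‖_p^p`,
where `ω_N = π^{N/2}/Γ(N/2+1)`. -/
theorem mazya_shaposhnikova_euclidean
    (N : ℕ) (hN : 1 ≤ N) (p : ℝ) (hp : 1 ≤ p)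
    (u : EuclideanSpace ℝ (Fin N) → ℝ)
    (hu : MemLp u (ENNReal.ofReal p))
    (s₀ : ℝ) (hs₀ : s₀ ∈ Set.Ioo (0:ℝ) 1)
    (hfin : ∫⁻ x, ∫⁻ y,
        ENNReal.ofReal (|u x - u y| ^ p / dist x y ^ ((N : ℝ) + s₀ * p)) < ⊤) :
    Tendsto (fun s : ℝ => ENNReal.ofReal s *
        ∫⁻ x, ∫⁻ y, ENNReal.ofReal (|u x - u y| ^ p / dist x y ^ ((N : ℝ) + s * p)))
      (nhdsWithin 0 (Set.Ioi 0))
      (nhds (ENNReal.ofReal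
          (2 * N * (Real.pi ^ ((N : ℝ) / 2) / Real.Gamma ((N : ℝ) / 2 + 1)) / p) *
        ∫⁻ x, ENNReal.ofReal (|u x| ^ p))) := by
  set v : EuclideanSpace ℝ (Fin N) → ℝ := hu.1.mk u with hvdef
  have hvm : Measurable v := hu.1.stronglyMeasurable_mk.measurable
  have huv : u =ᵐ[volume] v := hu.1.ae_eq_mk
  have hv_mem : MemLp v (ENNReal.ofReal p) := hu.ae_eq huv
  have hdouble : ∀ a : ℝ,
      (∫⁻ x, ∫⁻ y, ENNReal.ofReal (|u x - u y| ^ p / dist x y ^ a))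
        = ∫⁻ x, ∫⁻ y, ENNReal.ofReal (|v x - v y| ^ p / dist x y ^ a) := by
    intro a
    refine lintegral_congr_ae ?_
    filter_upwards [huv] with x hx
    refine lintegral_congr_ae ?_
    filter_upwards [huv] with y hy
    rw [hx, hy]
  have hLL : (∫⁻ x, ENNReal.ofReal (|u x| ^ p)) = ∫⁻ x, ENNReal.ofReal (|v x| ^ p) := by
    refine lintegral_congr_ae ?_
    filter_upwards [huv] with x hx
    rw [hx]
  have hmain := MazyaShap.main_meas hN p hp v hvm hv_mem s₀ hs₀
    (by rw [← hdouble]; exact hfin)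
  have hfuneq : (fun s : ℝ => ENNReal.ofReal s *
      ∫⁻ x, ∫⁻ y, ENNReal.ofReal (|u x - u y| ^ p / dist x y ^ ((N : ℝ) + s * p)))
      = fun s : ℝ => ENNReal.ofReal s *
      ∫⁻ x, ∫⁻ y, ENNReal.ofReal (|v x - v y| ^ p / dist x y ^ ((N : ℝ) + s * p)) := by
    funext s
    rw [hdouble]
  rw [hfuneq, hLL]
  exact hmain
end

section
/- Let (X,d,m) be a metric measure space with m(X) < ∞, let V : [0,∞) → [0,∞) be C¹ strictly increasing with V(t) → ∞ as t → ∞, let p ≥ 1, and let (ρ_n)_{n∈ℕ} be mollifiers of radial type satisfying the approximation of the identity associated to V (Condition 3). Then for every u ∈ L^p(X,m) such that E_{ρ_{n₀}}(u) < ∞ for some n₀ ∈ ℕ, one has lim_{n→∞} E_{ρ_n}(u) = 0. -/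
open MeasureTheory Filter Topology Metric Set ENNReal

/-- The nonlocal energy `E_ρ(u) = ∬_{x ≠ y} |u(x) - u(y)|^p ρ(x,y) dm(x) dm(y)`. -/
noncomputable def energy {X : Type*} [MeasurableSpace X] (μ : Measure X) (p : ℝ)
    (ρ : X → X → ℝ≥0∞) (u : X → ℝ) : ℝ≥0∞ :=
  ∫⁻ x, ∫⁻ y in {y | y ≠ x}, ENNReal.ofReal (|u x - u y| ^ p) * ρ x y ∂μ ∂μ

lemma energy_congr_ae {X : Type*} [MeasurableSpace X] {μ : Measure X} {p : ℝ}
    {ρ : X → X → ℝ≥0∞} {u v : X → ℝ} (h : u =ᵐ[μ] v) :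
    energy μ p ρ u = energy μ p ρ v := by
  unfold energy
  refine lintegral_congr_ae ?_
  filter_upwards [h] with x hx
  refine lintegral_congr_ae ?_
  filter_upwards [ae_restrict_of_ae h] with y hy
  rw [hx, hy]

set_option maxHeartbeats 1000000 in
/-- Remark 2.18: on a metric measure space of finite measure, radial mollifiers satisfying
Condition 3 give `E_{ρ_n}(u) → 0` for every `u ∈ L^p` with finite energy for some `n₀`. -/
theorem energy_tendsto_zero_of_finite_measure
    {X : Type*} [MetricSpace X] [CompleteSpace X] [TopologicalSpace.SeparableSpace X]
    [MeasurableSpace X] [BorelSpace X]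
    (μ : Measure X) [IsLocallyFiniteMeasure μ] [μ.IsOpenPosMeasure]
    (hfin_meas : μ Set.univ < ⊤)
    (p : ℝ) (hp : 1 ≤ p)
    -- `V` is a `C¹` strictly increasing function on `[0,∞)` with `V(t) → ∞`
    (V : ℝ → ℝ) (hV0 : 0 ≤ V 0) (hVmono : StrictMonoOn V (Set.Ici 0))
    (hVC1 : ContDiffOn ℝ 1 V (Set.Ici 0)) (hVtop : Tendsto V atTop atTop)
    -- Condition 3: mollifiers of radial type, approximation of the identity associated to `V`
    (ρt : ℕ → ℝ → ℝ)
    (hρ_nonneg : ∀ (n : ℕ), ∀ r > (0:ℝ), 0 ≤ ρt n r)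
    (hρ_anti : ∀ n, StrictAntiOn (ρt n) (Set.Ioi 0))
    (hρ_C1 : ∀ n, ContDiffOn ℝ 1 (ρt n) (Set.Ioi 0))
    -- Condition 3 (A)
    (hρ_lim : ∀ r > (0:ℝ), Tendsto (fun n => ρt n r) atTop (nhds 0))
    (hρ_V : ∀ n, Tendsto (fun r => ρt n r * V r) atTop (nhds 0))
    -- Condition 3 (B)
    (hρ_ratio : ∀ i j : ℕ, i < j → MonotoneOn (fun r => ρt j r / ρt i r) (Set.Ioi 0))
    -- Condition 3 (C): `lim_{R→∞} lim_{n→∞} ∫_R^∞ S(r) ρ̃_n(r) dr = 1`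
    (I : ℝ → ℝ)
    (hI : ∀ R > (0:ℝ), Tendsto (fun n => ∫ r in Set.Ioi R, deriv V r * ρt n r) atTop (nhds (I R)))
    (hI_one : Tendsto I atTop (nhds 1))
    (u : X → ℝ) (hu : MemLp u (ENNReal.ofReal p) μ)
    (hfin : ∃ n₀ : ℕ, energy μ p (fun x y => ENNReal.ofReal (ρt n₀ (dist x y))) u < ⊤) :
    Tendsto (fun n => energy μ p (fun x y => ENNReal.ofReal (ρt n (dist x y))) u) atTop
      (nhds 0) := by
  classical
  have hp0 : (0:ℝ) < p := lt_of_lt_of_le one_pos hp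
  haveI : IsFiniteMeasure μ := ⟨hfin_meas⟩
  obtain ⟨n₀, hE₀fin⟩ := hfin
  -- replace `u` by a measurable representative `v`
  obtain ⟨v, hvsm, huv⟩ := hu.aestronglyMeasurable
  have hvmeas : Measurable v := hvsm.measurable
  have hv : MemLp v (ENNReal.ofReal p) μ := hu.ae_eq huv
  have hrw : ∀ ρ : X → X → ℝ≥0∞, energy μ p ρ u = energy μ p ρ v :=
    fun ρ => energy_congr_ae huv
  simp only [hrw] at hE₀fin ⊢
  -- notation
  set f : X → X → ℝ≥0∞ := fun x y => ENNReal.ofReal (|v x - v y| ^ p) with hf_def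
  -- positivity of the mollifiers
  have hpos : ∀ m : ℕ, ∀ r > (0:ℝ), 0 < ρt m r := by
    intro m r hr
    exact lt_of_le_of_lt (hρ_nonneg m (r + 1) (by linarith))
      (hρ_anti m (mem_Ioi.mpr hr) (mem_Ioi.mpr (by linarith)) (by linarith))
  -- key pointwise real inequality
  have hreal : ∀ n : ℕ, n₀ < n → ∀ r > (0:ℝ),
      ρt n r ≤ ρt n 1 / ρt n₀ 1 * ρt n₀ r + ρt n 1 := by
    intro n hn r hr
    rcases le_or_gt r 1 with hr1 | hr1
    · have hm := hρ_ratio n₀ n hn (mem_Ioi.mpr hr) (mem_Ioi.mpr one_pos) hr1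
      have h0 : (0:ℝ) < ρt n₀ r := hpos n₀ r hr
      have h1 : ρt n r = ρt n r / ρt n₀ r * ρt n₀ r := (div_mul_cancel₀ _ h0.ne').symm
      have h2 : ρt n r / ρt n₀ r * ρt n₀ r ≤ ρt n 1 / ρt n₀ 1 * ρt n₀ r :=
        mul_le_mul_of_nonneg_right hm h0.le
      have h3 : 0 ≤ ρt n 1 := hρ_nonneg n 1 one_pos
      linarith [h1 ▸ h2]
    · have h1 : ρt n r < ρt n 1 :=
        hρ_anti n (mem_Ioi.mpr one_pos) (mem_Ioi.mpr hr) hr1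
      have h2 : 0 ≤ ρt n 1 / ρt n₀ 1 * ρt n₀ r :=
        mul_nonneg (div_nonneg (hρ_nonneg n 1 one_pos) (hρ_nonneg n₀ 1 one_pos))
          (hρ_nonneg n₀ r hr)
      linarith
  -- measurability of `f`
  have hf_meas : Measurable (fun q : X × X => f q.1 q.2) := by
    have h1 : Measurable fun q : X × X => |v q.1 - v q.2| :=
      ((hvmeas.comp measurable_fst).sub (hvmeas.comp measurable_snd)).abs
    exact ((Real.continuous_rpow_const hp0.le).measurable.comp h1).ennreal_ofReal
  have hfx_meas : ∀ x, Measurable (f x) := fun x =>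
    hf_meas.comp measurable_prodMk_left
  -- `f x x = 0`
  have hfxx : ∀ x, f x x = 0 := by
    intro x
    simp [hf_def, Real.zero_rpow hp0.ne']
  have hSmeas : ∀ x : X, MeasurableSet {y : X | y ≠ x} := fun x =>
    (measurableSet_singleton x).compl
  -- removing the diagonal point changes nothing
  have hFset : ∀ x, ∫⁻ y in {y | y ≠ x}, f x y ∂μ = ∫⁻ y, f x y ∂μ := by
    intro x
    have h := lintegral_add_compl (f x) (hSmeas x) (μ := μ)
    have hc : ({y : X | y ≠ x} : Set X)ᶜ = {x} := by
      ext y; simp [not_not]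
    rw [hc] at h
    rw [lintegral_singleton, hfxx, zero_mul, add_zero] at h
    exact h
  set F : X → ℝ≥0∞ := fun x => ∫⁻ y, f x y ∂μ with hF_def
  have hF_meas : Measurable F := hf_meas.lintegral_prod_right'
  -- finiteness of `K = ∫ |v|^p`
  set K : ℝ≥0∞ := ∫⁻ x, ENNReal.ofReal (|v x| ^ p) ∂μ with hK_def
  have hK : K < ⊤ := by
    have hint : Integrable (fun x => ‖v x‖ ^ (ENNReal.ofReal p).toReal) μ :=
      hv.integrable_norm_rpow (by simp [hp0]) (by simp)
    have h2 := hint.2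
    rw [hasFiniteIntegral_iff_norm] at h2
    refine lt_of_le_of_lt (le_of_eq (lintegral_congr fun x => ?_)) h2
    simp [ENNReal.toReal_ofReal hp0.le, Real.norm_eq_abs,
      abs_of_nonneg (Real.rpow_nonneg (abs_nonneg (v x)) p)]
  set C : ℝ≥0∞ := ∫⁻ x, F x ∂μ with hC_def
  -- pointwise bound on `f`
  have hfb : ∀ x y, f x y ≤
      ENNReal.ofReal (2 ^ p) * (ENNReal.ofReal (|v x| ^ p) + ENNReal.ofReal (|v y| ^ p)) := by
    intro x y
    set M := max |v x| |v y| with hM_def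
    have hM0 : 0 ≤ M := le_trans (abs_nonneg _) (le_max_left _ _)
    have h1 : |v x - v y| ≤ 2 * M := by
      have := abs_sub (v x) (v y)
      have h2 : |v x| + |v y| ≤ 2 * M := by
        rcases le_total |v x| |v y| with h | h
        · rw [hM_def, max_eq_right h]; linarith
        · rw [hM_def, max_eq_left h]; linarith
      linarith
    have h2 : |v x - v y| ^ p ≤ (2 * M) ^ p :=
      Real.rpow_le_rpow (abs_nonneg _) h1 hp0.le
    have h3 : (2 * M) ^ p = 2 ^ p * M ^ p := Real.mul_rpow (by norm_num) hM0
    have h4 : M ^ p ≤ |v x| ^ p + |v y| ^ p := by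
      rcases le_total |v x| |v y| with h | h
      · rw [hM_def, max_eq_right h]
        exact le_add_of_nonneg_left (Real.rpow_nonneg (abs_nonneg _) _)
      · rw [hM_def, max_eq_left h]
        exact le_add_of_nonneg_right (Real.rpow_nonneg (abs_nonneg _) _)
    have h5 : |v x - v y| ^ p ≤ 2 ^ p * (|v x| ^ p + |v y| ^ p) := by
      calc |v x - v y| ^ p ≤ 2 ^ p * M ^ p := h3 ▸ h2
      _ ≤ 2 ^ p * (|v x| ^ p + |v y| ^ p) :=
        mul_le_mul_of_nonneg_left h4 (Real.rpow_nonneg (by norm_num) _)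
    calc f x y ≤ ENNReal.ofReal (2 ^ p * (|v x| ^ p + |v y| ^ p)) :=
      ENNReal.ofReal_le_ofReal h5
    _ = ENNReal.ofReal (2 ^ p) * (ENNReal.ofReal (|v x| ^ p) + ENNReal.ofReal (|v y| ^ p)) := by
      rw [ENNReal.ofReal_mul (Real.rpow_nonneg (by norm_num) _),
        ENNReal.ofReal_add (Real.rpow_nonneg (abs_nonneg _) _)
          (Real.rpow_nonneg (abs_nonneg _) _)]
  have hvp_meas : Measurable fun x => ENNReal.ofReal (|v x| ^ p) :=
    ((Real.continuous_rpow_const hp0.le).measurable.comp hvmeas.abs).ennreal_ofReal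
  have hFb : ∀ x, F x ≤ ENNReal.ofReal (2 ^ p) * (ENNReal.ofReal (|v x| ^ p) * μ univ + K) := by
    intro x
    calc F x ≤ ∫⁻ y, ENNReal.ofReal (2 ^ p) *
        (ENNReal.ofReal (|v x| ^ p) + ENNReal.ofReal (|v y| ^ p)) ∂μ :=
      lintegral_mono fun y => hfb x y
    _ = ENNReal.ofReal (2 ^ p) *
        ∫⁻ y, (ENNReal.ofReal (|v x| ^ p) + ENNReal.ofReal (|v y| ^ p)) ∂μ :=
      lintegral_const_mul' _ _ ENNReal.ofReal_ne_top
    _ = ENNReal.ofReal (2 ^ p) * (ENNReal.ofReal (|v x| ^ p) * μ univ + K) := by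
      rw [lintegral_add_left measurable_const, lintegral_const]
  have hC : C < ⊤ := by
    have h1 : C ≤ ∫⁻ x, ENNReal.ofReal (2 ^ p) *
        (ENNReal.ofReal (|v x| ^ p) * μ univ + K) ∂μ := lintegral_mono hFb
    rw [lintegral_const_mul' _ _ ENNReal.ofReal_ne_top,
      lintegral_add_right _ measurable_const, lintegral_const,
      lintegral_mul_const _ hvp_meas] at h1
    refine lt_of_le_of_lt h1 (ENNReal.mul_lt_top ENNReal.ofReal_lt_top ?_)
    exact ENNReal.add_lt_top.mpr
      ⟨ENNReal.mul_lt_top hK hfin_meas, ENNReal.mul_lt_top hK hfin_meas⟩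
  -- the key upper bound for `n > n₀`
  have key : ∀ n : ℕ, n₀ < n →
      energy μ p (fun x y => ENNReal.ofReal (ρt n (dist x y))) v ≤
        ENNReal.ofReal (ρt n 1 / ρt n₀ 1) *
          energy μ p (fun x y => ENNReal.ofReal (ρt n₀ (dist x y))) v +
        ENNReal.ofReal (ρt n 1) * C := by
    intro n hn
    set a := ENNReal.ofReal (ρt n 1 / ρt n₀ 1) with ha_def
    set b := ENNReal.ofReal (ρt n 1) with hb_def
    have hinner : ∀ x, ∫⁻ y in {y | y ≠ x}, f x y * ENNReal.ofReal (ρt n (dist x y)) ∂μ ≤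
        a * (∫⁻ y in {y | y ≠ x}, f x y * ENNReal.ofReal (ρt n₀ (dist x y)) ∂μ) + b * F x := by
      intro x
      have hg₀ : AEMeasurable (fun y => ENNReal.ofReal (ρt n₀ (dist x y)))
          (μ.restrict {y | y ≠ x}) := by
        have hcont : ContinuousOn (fun y => ρt n₀ (dist x y)) {y : X | y ≠ x} := by
          refine (hρ_C1 n₀).continuousOn.comp
            (Continuous.continuousOn (continuous_const.dist continuous_id)) ?_
          intro y hy
          exact mem_Ioi.mpr (dist_pos.mpr (Ne.symm hy))
        exact (hcont.aemeasurable (hSmeas x)).ennreal_ofReal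
      have hmono : ∫⁻ y in {y | y ≠ x}, f x y * ENNReal.ofReal (ρt n (dist x y)) ∂μ ≤
          ∫⁻ y in {y | y ≠ x},
            (a * (f x y * ENNReal.ofReal (ρt n₀ (dist x y))) + b * f x y) ∂μ := by
        refine lintegral_mono_ae ?_
        filter_upwards [ae_restrict_mem (hSmeas x)] with y hy
        have hd : (0:ℝ) < dist x y := dist_pos.mpr (Ne.symm hy)
        have h1 : ENNReal.ofReal (ρt n (dist x y)) ≤
            a * ENNReal.ofReal (ρt n₀ (dist x y)) + b := by
          calc ENNReal.ofReal (ρt n (dist x y)) ≤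
              ENNReal.ofReal (ρt n 1 / ρt n₀ 1 * ρt n₀ (dist x y) + ρt n 1) :=
            ENNReal.ofReal_le_ofReal (hreal n hn _ hd)
          _ = a * ENNReal.ofReal (ρt n₀ (dist x y)) + b := by
            rw [ENNReal.ofReal_add
              (mul_nonneg (div_nonneg (hρ_nonneg n 1 one_pos) (hρ_nonneg n₀ 1 one_pos))
                (hρ_nonneg n₀ _ hd)) (hρ_nonneg n 1 one_pos),
              ENNReal.ofReal_mul (div_nonneg (hρ_nonneg n 1 one_pos) (hρ_nonneg n₀ 1 one_pos))]
        calc f x y * ENNReal.ofReal (ρt n (dist x y)) ≤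
            f x y * (a * ENNReal.ofReal (ρt n₀ (dist x y)) + b) := mul_le_mul_right h1 _
        _ = a * (f x y * ENNReal.ofReal (ρt n₀ (dist x y))) + b * f x y := by ring
      refine hmono.trans (le_of_eq ?_)
      have hmeas1 : AEMeasurable
          (fun y => a * (f x y * ENNReal.ofReal (ρt n₀ (dist x y))))
          (μ.restrict {y | y ≠ x}) :=
        (((hfx_meas x).aemeasurable.restrict.mul hg₀).const_mul a)
      rw [lintegral_add_left' hmeas1, lintegral_const_mul' a _ ENNReal.ofReal_ne_top,
        lintegral_const_mul' b _ ENNReal.ofReal_ne_top, hFset x]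
    calc energy μ p (fun x y => ENNReal.ofReal (ρt n (dist x y))) v =
        ∫⁻ x, ∫⁻ y in {y | y ≠ x}, f x y * ENNReal.ofReal (ρt n (dist x y)) ∂μ ∂μ := rfl
    _ ≤ ∫⁻ x, (a * (∫⁻ y in {y | y ≠ x}, f x y * ENNReal.ofReal (ρt n₀ (dist x y)) ∂μ)
          + b * F x) ∂μ := lintegral_mono hinner
    _ = a * energy μ p (fun x y => ENNReal.ofReal (ρt n₀ (dist x y))) v + b * C := by
      rw [lintegral_add_right' _ ((hF_meas.const_mul b).aemeasurable),
        lintegral_const_mul' a _ ENNReal.ofReal_ne_top,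
        lintegral_const_mul' b _ ENNReal.ofReal_ne_top]
      rfl
  -- limits
  have ha : Tendsto (fun n => ENNReal.ofReal (ρt n 1 / ρt n₀ 1)) atTop (nhds 0) := by
    have h1 : Tendsto (fun n => ρt n 1 / ρt n₀ 1) atTop (nhds 0) := by
      simpa using (hρ_lim 1 one_pos).div_const (ρt n₀ 1)
    simpa using ENNReal.tendsto_ofReal h1
  have hb : Tendsto (fun n => ENNReal.ofReal (ρt n 1)) atTop (nhds 0) := by
    simpa using ENNReal.tendsto_ofReal (hρ_lim 1 one_pos)
  have hsum : Tendsto (fun n => ENNReal.ofReal (ρt n 1 / ρt n₀ 1) *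
      energy μ p (fun x y => ENNReal.ofReal (ρt n₀ (dist x y))) v +
      ENNReal.ofReal (ρt n 1) * C) atTop (nhds 0) := by
    have h1 := ENNReal.Tendsto.mul_const ha (Or.inr hE₀fin.ne)
    have h2 := ENNReal.Tendsto.mul_const hb (Or.inr hC.ne)
    simpa using h1.add h2
  refine tendsto_of_tendsto_of_tendsto_of_le_of_le' tendsto_const_nhds hsum ?_ ?_
  · exact Eventually.of_forall fun n => zero_le
  · filter_upwards [eventually_gt_atTop n₀] with n hn using key n hn
end
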